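/- Let f : X → Y and g : Y → Z be morphisms of schemes with g étale. If the composite g ∘ f has preconnected geometric fibers (for every algebraically closed field K and every morphism v : Spec K → Z the underlying topological space of X ×_{Z, v} Spec K is preconnected), then f has preconnected geometric fibers. -/

import Mathlib

set_option maxHeartbeats 1000000

open AlgebraicGeometry CategoryTheory CategoryTheory.Limits

universe u

section Auxiliary

open Algebra

/-- A scheme étale over (the spectrum of) a field has discrete underlying space. -/
theorem discreteTopology_of_isEtale_over_field {K : Type u} [Field K] {W : Scheme.{u}}
    (h : W ⟶ Spec (CommRingCat.of K)) [Etale h] : DiscreteTopology W := by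
  haveI : LocallyQuasiFinite h := by
    rw [HasRingHomProperty.iff_appLE (P := @LocallyQuasiFinite)]
    intro U V e
    have h1 := HasRingHomProperty.appLE @Etale h ‹Etale h› U V e
    algebraize [(h.appLE U V e).hom]
    exact RingHom.quasiFinite_algebraMap.mpr inferInstance
  obtain ⟨y⟩ : Nonempty (Spec (CommRingCat.of K)) := inferInstance
  have hd := h.isDiscrete_preimage_singleton y
  have : h ⁻¹' {y} = Set.univ := by
    ext x; simp only [Set.mem_preimage, Set.mem_singleton_iff, Set.mem_univ, iff_true]
    exact Subsingleton.elim _ _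
  rw [this] at hd
  exact isDiscrete_univ_iff.mp hd

end Auxiliary

/-- If `g : Y ⟶ Z` is étale and the composite `f ≫ g` has preconnected geometric fibers,
then `f : X ⟶ Y` has preconnected geometric fibers. -/
theorem preconnected_geometric_fibers_of_comp_of_etale
    {X Y Z : Scheme.{u}} (f : X ⟶ Y) (g : Y ⟶ Z) [Etale g]
    (hgf : ∀ (K : Type u) [Field K] [IsAlgClosed K]
      (v : Spec (CommRingCat.of K) ⟶ Z), PreconnectedSpace ↥(pullback (f ≫ g) v)) :
    ∀ (K : Type u) [Field K] [IsAlgClosed K]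
      (y : Spec (CommRingCat.of K) ⟶ Y), PreconnectedSpace ↥(pullback f y) := by
  intro K _ _ y
  haveI : Etale (pullback.snd g (y ≫ g)) :=
    inferInstance
  haveI hdis : DiscreteTopology ↥(pullback g (y ≫ g)) :=
    discreteTopology_of_isEtale_over_field (pullback.snd g (y ≫ g))
  -- the "graph" section of the projection `Y ×[Z] Spec K ⟶ Spec K` through `y`
  let s : Spec (CommRingCat.of K) ⟶ pullback g (y ≫ g) :=
    pullback.lift (𝟙 _) y (by simp) ≫ (pullbackSymmetry (y ≫ g) g).hom
  haveI hs0 : IsImmersion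
      (pullback.lift (𝟙 _) y (by simp) : Spec (CommRingCat.of K) ⟶ pullback (y ≫ g) g) :=
    MorphismProperty.of_isPullback (pullback_lift_diagonal_isPullback y g)
      (inferInstance : IsImmersion (pullback.diagonal g))
  haveI hs : IsImmersion s := inferInstance
  have hsfst : s ≫ pullback.fst g (y ≫ g) = y := by
    simp [s]
    exact pullback.lift_snd _ _ _
  -- the geometric fiber of `f ≫ g` as a pullback of `f`
  haveI hP : PreconnectedSpace ↥(pullback f (pullback.fst g (y ≫ g))) := by
    have h1 := hgf K (y ≫ g)
    let homeo := Scheme.homeoOfIso (pullbackRightPullbackFstIso g (y ≫ g) f).symm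
    refine ⟨?_⟩
    have h2 := (isPreconnected_univ (α := ↥(pullback (f ≫ g) (y ≫ g)))).image
      homeo homeo.continuous.continuousOn
    rwa [Set.image_univ, Set.range_eq_univ.mpr homeo.surjective] at h2
  -- the geometric fiber of `f` at `y` maps into it
  let e2 : pullback f y ≅ pullback (pullback.snd f (pullback.fst g (y ≫ g))) s :=
    pullback.congrHom rfl hsfst.symm ≪≫
      (pullbackLeftPullbackSndIso f (pullback.fst g (y ≫ g)) s).symm
  haveI : IsImmersion (pullback.fst (pullback.snd f (pullback.fst g (y ≫ g))) s) :=
    inferInstance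
  let m : pullback f y ⟶ pullback f (pullback.fst g (y ≫ g)) :=
    e2.hom ≫ pullback.fst (pullback.snd f (pullback.fst g (y ≫ g))) s
  haveI hm : IsImmersion m := inferInstance
  have hrange : IsClopen (Set.range m.base) := by
    have hsurj : Function.Surjective e2.hom.base := (Scheme.homeoOfIso e2).surjective
    have h1 : Set.range m.base
        = Set.range (pullback.fst (pullback.snd f (pullback.fst g (y ≫ g))) s).base := by
      show Set.range (e2.hom ≫ _).base = _
      rw [Scheme.Hom.comp_base, TopCat.coe_comp, Set.range_comp, hsurj.range_eq, Set.image_univ]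
    rw [h1, Scheme.Pullback.range_fst]
    exact (isClopen_discrete _).preimage (pullback.snd f (pullback.fst g (y ≫ g))).continuous
  have hpc : _root_.IsPreconnected (Set.range m.base) := by
    rcases isClopen_iff.mp hrange with h | h
    · rw [h]; exact isPreconnected_empty
    · rw [h]; exact isPreconnected_univ
  refine ⟨?_⟩
  have hpc' : _root_.IsPreconnected (⇑m.base '' Set.univ) := by rwa [Set.image_univ]
  exact m.isEmbedding.toIsInducing.isPreconnected_image.mp hpc'
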